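/- (Greedy guarantee for submodular cover) Let g : Finset V → ℤ be a nonnegative integer-valued monotone submodular function with g(∅)=0, and let Q = g(V) (the maximum). Let Ŝ be the output of the greedy algorithm that adds elements of maximal marginal gain until g(Ŝ) = Q. Then |Ŝ| ≤ (1 + ln(max_{a} g({a}))) · |S*| for every S* with g(S*) = Q; in particular |Ŝ| ≤ (1 + ln g(V)) · |S*|. -/

import Mathlib

private lemma tele_aux {V : Type*} [DecidableEq V] (g : Finset V → ℤ)
    (hmono : ∀ A B : Finset V, A ⊆ B → g A ≤ g B)
    (hsub : ∀ A B : Finset V, A ⊆ B → ∀ a ∉ B,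
      g (insert a A) - g A ≥ g (insert a B) - g B)
    (A B : Finset V) :
    g (A ∪ B) - g A ≤ ∑ a ∈ B, (g (insert a A) - g A) := by
  classical
  induction B using Finset.induction_on with
  | empty => simp
  | @insert b B' hb ih =>
    rw [Finset.sum_insert hb, Finset.union_insert]
    by_cases hbA : b ∈ A ∪ B'
    · have h1 : insert b (A ∪ B') = A ∪ B' := Finset.insert_eq_self.2 hbA
      have h2 : g A ≤ g (insert b A) := hmono _ _ (Finset.subset_insert _ _)
      rw [h1]; linarith
    · have h2 := hsub A (A ∪ B') Finset.subset_union_left b hbA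
      linarith

theorem stmt_8 {V : Type*} [Fintype V] [DecidableEq V] [Nonempty V]
    (g : Finset V → ℤ)
    (hnonneg : ∀ S, 0 ≤ g S)
    (hmono : ∀ A B : Finset V, A ⊆ B → g A ≤ g B)
    (hsub : ∀ A B : Finset V, A ⊆ B → ∀ a ∉ B,
      g (insert a A) - g A ≥ g (insert a B) - g B)
    (hempty : g ∅ = 0)
    -- greedy run: S 0 = ∅, at each step t < T an argmax element is added,
    -- and the run stops exactly when the maximum value Q = g(univ) is reached
    (S : ℕ → Finset V) (T : ℕ)
    (h0 : S 0 = ∅)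
    (hstep : ∀ t < T, g (S t) < g Finset.univ ∧
      ∃ a, a ∉ S t ∧ S (t + 1) = insert a (S t) ∧
        ∀ b, g (insert b (S t)) ≤ g (insert a (S t)))
    (hT : g (S T) = g Finset.univ) :
    ∀ Sstar : Finset V, g Sstar = g Finset.univ →
      ((S T).card : ℝ) ≤
        (1 + Real.log ((Finset.univ.sup' Finset.univ_nonempty
          (fun a : V => g {a}) : ℤ) : ℝ)) * Sstar.card ∧
      ((S T).card : ℝ) ≤ (1 + Real.log ((g Finset.univ : ℤ) : ℝ)) * Sstar.card := by
  classical
  intro Sstar hstar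
  set Q : ℤ := g Finset.univ with hQdef
  set M : ℤ := Finset.univ.sup' Finset.univ_nonempty (fun a : V => g {a}) with hMdef
  have hMsup : ∀ a : V, g {a} ≤ M := by
    intro a
    rw [hMdef]
    exact Finset.le_sup' (fun a : V => g {a}) (Finset.mem_univ a)
  have hM0 : 0 ≤ M := by
    obtain ⟨a⟩ := ‹Nonempty V›
    exact le_trans (hnonneg {a}) (hMsup a)
  have hlogM0 : 0 ≤ Real.log (M : ℝ) := by
    rcases eq_or_lt_of_le hM0 with h | h
    · rw [← h]; simp
    · exact Real.log_nonneg (by exact_mod_cast h)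
  have hQ0 : 0 ≤ Q := hnonneg _
  have hlogQ0 : 0 ≤ Real.log (Q : ℝ) := by
    rcases eq_or_lt_of_le hQ0 with h | h
    · rw [← h]; simp
    · exact Real.log_nonneg (by exact_mod_cast h)
  -- cardinality of greedy set
  have hcard : ∀ t, t ≤ T → (S t).card = t := by
    intro t
    induction t with
    | zero => intro _; simp [h0]
    | succ t ih =>
      intro ht
      obtain ⟨_, a, ha, hS1, _⟩ := hstep t (by omega)
      rw [hS1, Finset.card_insert_of_notMem ha, ih (by omega)]
  rcases Nat.eq_zero_or_pos T with hT0 | hTpos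
  · have hc : ((S T).card : ℝ) = 0 := by rw [hcard T le_rfl, hT0]; simp
    rw [hc]
    constructor <;>
      exact mul_nonneg (by linarith) (by positivity)
  -- Now T ≥ 1
  have hQ1 : 1 ≤ Q := by
    have := (hstep 0 hTpos).1
    rw [h0, hempty] at this; omega
  have hSne : Sstar.Nonempty := by
    rcases Finset.eq_empty_or_nonempty Sstar with h | h
    · exfalso; rw [h, hempty] at hstar; omega
    · exact h
  set k : ℤ := (Sstar.card : ℤ) with hkdef
  have hk1 : 1 ≤ k := by
    rw [hkdef]; exact_mod_cast Finset.card_pos.2 hSne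
  set d : ℕ → ℤ := fun t => Q - g (S t) with hddef
  have hd0 : d 0 = Q := by simp [hddef, h0, hempty]
  have hdnn : ∀ t, 0 ≤ d t := fun t => by
    simp only [hddef, sub_nonneg]; exact hmono _ _ (Finset.subset_univ _)
  have hdpos : ∀ t, t < T → 1 ≤ d t := by
    intro t ht; have := (hstep t ht).1; simp only [hddef]; omega
  have hdT : d T = 0 := by simp [hddef, hT]
  -- key per-step inequality
  have hkey : ∀ t, t < T → d t ≤ k * (d t - d (t + 1)) := by
    intro t ht
    obtain ⟨hlt, a, ha, hS1, hmax⟩ := hstep t ht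
    have h1 : Q ≤ g (S t ∪ Sstar) := by
      rw [← hstar]; exact hmono _ _ Finset.subset_union_right
    have h2 := tele_aux g hmono hsub (S t) Sstar
    have h3 : ∑ b ∈ Sstar, (g (insert b (S t)) - g (S t)) ≤
        Sstar.card • (g (insert a (S t)) - g (S t)) := by
      rw [← Finset.sum_const]
      exact Finset.sum_le_sum (fun b _ => by have := hmax b; omega)
    rw [nsmul_eq_mul] at h3
    have h4 : d t - d (t + 1) = g (insert a (S t)) - g (S t) := by
      simp only [hddef, hS1]; ring
    rw [h4, hkdef]
    simp only [hddef]
    simp only [hddef] at h4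
    linarith
  -- each step gains at least 1
  have hgain1 : ∀ t, t < T → d (t + 1) ≤ d t - 1 := by
    intro t ht
    by_contra hcon
    push_neg at hcon
    have hg0 : d t - d (t + 1) ≤ 0 := by omega
    have : k * (d t - d (t + 1)) ≤ 0 :=
      mul_nonpos_iff.2 (Or.inl ⟨by linarith, hg0⟩)
    have := hkey t ht
    have := hdpos t ht
    omega
  -- geometric decay (integer form)
  have hdecay : ∀ t, t ≤ T → k ^ t * d t ≤ (k - 1) ^ t * Q := by
    intro t
    induction t with
    | zero => intro _; simp [hd0]
    | succ t ih =>
      intro ht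
      have h1 : k * d (t + 1) ≤ (k - 1) * d t := by
        have := hkey t (by omega); nlinarith
      calc k ^ (t + 1) * d (t + 1) = k ^ t * (k * d (t + 1)) := by ring
        _ ≤ k ^ t * ((k - 1) * d t) :=
            mul_le_mul_of_nonneg_left h1 (pow_nonneg (by linarith) t)
        _ = (k - 1) * (k ^ t * d t) := by ring
        _ ≤ (k - 1) * ((k - 1) ^ t * Q) :=
            mul_le_mul_of_nonneg_left (ih (by omega)) (by linarith)
        _ = (k - 1) ^ (t + 1) * Q := by ring
  -- real form with exp
  have hkR : (1 : ℝ) ≤ (k : ℝ) := by exact_mod_cast hk1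
  have hkRpos : (0 : ℝ) < (k : ℝ) := by linarith
  have hreal : ∀ t, t ≤ T → (d t : ℝ) ≤ (Q : ℝ) * Real.exp (-(t : ℝ) / k) := by
    intro t ht
    have h1 : ((d t : ℝ)) * (k : ℝ) ^ t ≤ ((k : ℝ) - 1) ^ t * Q := by
      have := hdecay t ht
      have h2 : ((k ^ t * d t : ℤ) : ℝ) ≤ (((k - 1) ^ t * Q : ℤ) : ℝ) := by exact_mod_cast this
      push_cast at h2
      linarith
    have hkt : (0 : ℝ) < (k : ℝ) ^ t := pow_pos hkRpos t
    have h3 : (d t : ℝ) ≤ (((k : ℝ) - 1) / k) ^ t * Q := by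
      rw [div_pow, div_mul_eq_mul_div, le_div_iff₀ hkt]
      linarith
    have h4 : ((k : ℝ) - 1) / k ≤ Real.exp (-(1 : ℝ) / k) := by
      have := Real.add_one_le_exp (-(1 : ℝ) / k)
      have h5 : ((k : ℝ) - 1) / k = -(1 : ℝ) / k + 1 := by field_simp; ring
      linarith
    have h6 : (((k : ℝ) - 1) / k) ^ t ≤ Real.exp (-(1 : ℝ) / k) ^ t :=
      pow_le_pow_left₀ (div_nonneg (by linarith) (by linarith)) h4 t
    have h7 : Real.exp (-(1 : ℝ) / k) ^ t = Real.exp (-(t : ℝ) / k) := by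
      rw [← Real.exp_nat_mul]; ring_nf
    calc (d t : ℝ) ≤ (((k : ℝ) - 1) / k) ^ t * Q := h3
      _ ≤ Real.exp (-(t : ℝ) / k) * Q := by
          apply mul_le_mul_of_nonneg_right _ (by exact_mod_cast hQ0)
          rw [← h7]; exact h6
      _ = (Q : ℝ) * Real.exp (-(t : ℝ) / k) := by ring
  -- first time deficiency drops below k
  have hPex : ∃ t, d t ≤ k - 1 := ⟨T, by omega⟩
  set T1 := Nat.find hPex with hT1def
  have hT1spec : d T1 ≤ k - 1 := Nat.find_spec hPex
  have hT1le : T1 ≤ T := by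
    by_contra hcon
    push_neg at hcon
    exact absurd hdT (by have := Nat.find_min hPex hcon; omega)
  -- phase B: after T1, decreases by ≥ 1 each step
  have hB : ∀ m, T1 + m ≤ T → d (T1 + m) ≤ d T1 - m := by
    intro m
    induction m with
    | zero => intro _; simp
    | succ m ih =>
      intro hm
      have h1 := hgain1 (T1 + m) (by omega)
      have h2 := ih (by omega)
      have : T1 + (m + 1) = (T1 + m) + 1 := by omega
      rw [this]
      push_cast
      push_cast at h2
      omega
  have hTbound : (T : ℤ) ≤ (T1 : ℤ) + k - 1 := by
    rcases eq_or_lt_of_le hT1le with h | h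
    · rw [← h]; omega
    · have hm : T1 + (T - 1 - T1) = T - 1 := by omega
      have h1 := hB (T - 1 - T1) (by omega)
      rw [hm] at h1
      have h2 := hdpos (T - 1) (by omega)
      have : ((T - 1 - T1 : ℕ) : ℤ) = (T : ℤ) - 1 - T1 := by omega
      omega
  have hcardT : ((S T).card : ℝ) = (T : ℝ) := by rw [hcard T le_rfl]
  rw [hcardT]
  have hkcast : ((Sstar.card : ℕ) : ℝ) = (k : ℝ) := by rw [hkdef]; push_cast; ring
  rw [hkcast]
  -- case on T1
  rcases Nat.eq_zero_or_pos T1 with hT10 | hT1pos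
  · -- T ≤ k - 1, easy
    have : (T : ℝ) ≤ (k : ℝ) - 1 := by
      have : (T : ℤ) ≤ k - 1 := by rw [hT10] at hTbound; omega
      exact_mod_cast this
    constructor <;> nlinarith
  · -- main case
    have hnot : ¬ d (T1 - 1) ≤ k - 1 := Nat.find_min hPex (by omega)
    have hd1 : (k : ℝ) ≤ (d (T1 - 1) : ℝ) := by exact_mod_cast (by omega : k ≤ d (T1 - 1))
    have hr := hreal (T1 - 1) (by omega)
    set t0 : ℕ := T1 - 1 with ht0def
    have hQR : (0 : ℝ) < (Q : ℝ) := by exact_mod_cast hQ1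
    have hexp : Real.exp ((t0 : ℝ) / k) ≤ (Q : ℝ) / k := by
      rw [le_div_iff₀ hkRpos]
      have hepos : (0 : ℝ) < Real.exp ((t0 : ℝ) / k) := Real.exp_pos _
      have h1 : (k : ℝ) ≤ (Q : ℝ) * Real.exp (-(t0 : ℝ) / k) := le_trans hd1 hr
      have h2 : (k : ℝ) * Real.exp ((t0 : ℝ) / k) ≤
          (Q : ℝ) * Real.exp (-(t0 : ℝ) / k) * Real.exp ((t0 : ℝ) / k) :=
        mul_le_mul_of_nonneg_right h1 (le_of_lt hepos)
      have h3 : Real.exp (-(t0 : ℝ) / k) * Real.exp ((t0 : ℝ) / k) = 1 := by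
        rw [← Real.exp_add]; ring_nf; exact Real.exp_zero
      calc Real.exp ((t0 : ℝ) / k) * (k : ℝ) = (k : ℝ) * Real.exp ((t0 : ℝ) / k) := by ring
        _ ≤ (Q : ℝ) * Real.exp (-(t0 : ℝ) / k) * Real.exp ((t0 : ℝ) / k) := h2
        _ = (Q : ℝ) := by rw [mul_assoc, h3, mul_one]
    have hlog : (t0 : ℝ) / k ≤ Real.log ((Q : ℝ) / k) := by
      have hdivpos : (0 : ℝ) < (Q : ℝ) / k := by positivity
      exact (Real.le_log_iff_exp_le hdivpos).2 hexp
    have hlogdiv : Real.log ((Q : ℝ) / k) = Real.log Q - Real.log k :=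
      Real.log_div (ne_of_gt hQR) (ne_of_gt hkRpos)
    have ht0b : (t0 : ℝ) ≤ (k : ℝ) * (Real.log Q - Real.log k) := by
      rw [hlogdiv] at hlog
      rw [div_le_iff₀ hkRpos] at hlog
      linarith
    have hTr : (T : ℝ) ≤ (t0 : ℝ) + (k : ℝ) := by
      have h1 : (T : ℤ) ≤ (t0 : ℤ) + k := by
        have : (t0 : ℤ) = (T1 : ℤ) - 1 := by simp [ht0def]; omega
        omega
      exact_mod_cast h1
    have hmain : (T : ℝ) ≤ (k : ℝ) * (1 + Real.log Q - Real.log k) := by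
      have he : (k : ℝ) * (1 + Real.log Q - Real.log k)
          = (k : ℝ) * (Real.log Q - Real.log k) + k := by ring
      rw [he]; linarith
    have hlogk0 : 0 ≤ Real.log (k : ℝ) := Real.log_nonneg hkR
    constructor
    · -- need log Q - log k ≤ log M
      have hQkM : Q ≤ k * M := by
        have h1 := tele_aux g hmono hsub ∅ Sstar
        simp only [Finset.empty_union, hempty, sub_zero, Finset.insert_empty] at h1
        have h2 : ∑ a ∈ Sstar, g {a} ≤ ∑ _a ∈ Sstar, M :=
          Finset.sum_le_sum (fun a _ => hMsup a)
        rw [Finset.sum_const, nsmul_eq_mul] at h2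
        rw [← hstar]
        calc g Sstar ≤ ∑ a ∈ Sstar, g {a} := h1
          _ ≤ (Sstar.card : ℤ) * M := h2
          _ = k * M := by rw [hkdef]
      have hlogle : Real.log ((Q : ℝ) / k) ≤ Real.log (M : ℝ) := by
        apply Real.log_le_log (by positivity)
        rw [div_le_iff₀ hkRpos]
        have : (Q : ℝ) ≤ (k : ℝ) * M := by exact_mod_cast hQkM
        linarith
      rw [hlogdiv] at hlogle
      calc (T : ℝ) ≤ (k : ℝ) * (1 + Real.log Q - Real.log k) := hmain
        _ ≤ (k : ℝ) * (1 + Real.log M) :=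
            mul_le_mul_of_nonneg_left (by linarith) (le_of_lt hkRpos)
        _ = (1 + Real.log (M : ℝ)) * k := by ring
    · calc (T : ℝ) ≤ (k : ℝ) * (1 + Real.log Q - Real.log k) := hmain
        _ ≤ (k : ℝ) * (1 + Real.log Q) :=
            mul_le_mul_of_nonneg_left (by linarith) (le_of_lt hkRpos)
        _ = (1 + Real.log (Q : ℝ)) * k := by ring
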